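/- Let I₁ > 0, T ∈ (0, ∞], and let R : [0, T) → ℝ be differentiable with R(0) = 0, 0 ≤ R(t) < 1 for all t, R'(t) = √(I₁·(1 + R(t)²)³/(1 − R(t)²)) for all t, and R(t) → 1 as t → T. Then T = I₁^{−1/2}·∫₀¹ √((1 − r²)/(1 + r²)³) dr. -/

import Mathlib

open Real Filter Set intervalIntegral

noncomputable def ffTT (r : ℝ) : ℝ := Real.sqrt ((1 - r ^ 2) / (1 + r ^ 2) ^ 3)

lemma ffTT_cont : Continuous ffTT := by
  apply Real.continuous_sqrt.comp
  apply Continuous.div (by continuity) (by continuity)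
  intro r; positivity

noncomputable def FFTT (x : ℝ) : ℝ := ∫ r in (0:ℝ)..x, ffTT r

lemma FFTT_deriv (x : ℝ) : HasDerivAt FFTT (ffTT x) x :=
  intervalIntegral.integral_hasDerivAt_right (ffTT_cont.intervalIntegrable 0 x)
    (ffTT_cont.stronglyMeasurableAtFilter _ _)
    ffTT_cont.continuousAt

lemma FFTT_le (x : ℝ) (hx1 : x ≤ 1) : FFTT x ≤ FFTT 1 := by
  have h : FFTT 1 - FFTT x = ∫ r in x..(1:ℝ), ffTT r := by
    unfold FFTT
    rw [← intervalIntegral.integral_add_adjacent_intervals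
      (ffTT_cont.intervalIntegrable 0 x) (ffTT_cont.intervalIntegrable x 1)]
    ring
  have h2 : 0 ≤ ∫ r in x..(1:ℝ), ffTT r :=
    intervalIntegral.integral_nonneg hx1 (fun r _ => Real.sqrt_nonneg _)
  linarith

/-- The exact travel time of a zero angular momentum geodesic of energy `I₁ > 0` from
the pole `R = 0` to the lagrangian circle `R = 1`:
`T = I₁^{-1/2} ∫₀¹ √((1 − r²)/(1 + r²)³) dr`. -/
theorem exact_travel_time (I₁ : ℝ) (hI₁ : 0 < I₁) (T : EReal) (hT : 0 < T)
    (R : ℝ → ℝ) (D : Set ℝ) (hD : D = {t : ℝ | 0 ≤ t ∧ (t : EReal) < T})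
    (hR0 : R 0 = 0)
    (hrange : ∀ t ∈ D, 0 ≤ R t ∧ R t < 1)
    (hR' : ∀ t ∈ D, HasDerivWithinAt R
      (Real.sqrt (I₁ * (1 + R t ^ 2) ^ 3 / (1 - R t ^ 2))) D t)
    (hlim : Filter.Tendsto R
      (Filter.comap (fun t : ℝ => (t : EReal)) (nhdsWithin T (Set.Iio T))) (nhds 1)) :
    T = ((I₁ ^ (-(1 : ℝ) / 2) *
      ∫ r in (0 : ℝ)..1, Real.sqrt ((1 - r ^ 2) / (1 + r ^ 2) ^ 3) : ℝ) : EReal) := by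
  have hsqrt : 0 < Real.sqrt I₁ := Real.sqrt_pos.2 hI₁
  set c := Real.sqrt I₁ with hc
  -- D is convex
  have hconv : Convex ℝ D := by
    rw [hD]
    intro x hx y hy a b ha hb hab
    simp only [smul_eq_mul, mem_setOf_eq] at *
    obtain ⟨hx0, hxT⟩ := hx
    obtain ⟨hy0, hyT⟩ := hy
    refine ⟨by positivity, ?_⟩
    have hmax : a * x + b * y ≤ max x y := by
      calc a * x + b * y ≤ a * max x y + b * max x y := by
            gcongr
            · exact le_max_left x y
            · exact le_max_right x y
        _ = max x y := by rw [← add_mul, hab, one_mul]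
    calc ((a * x + b * y : ℝ) : EReal) ≤ ((max x y : ℝ) : EReal) :=
          EReal.coe_le_coe_iff.2 hmax
      _ < T := by rcases max_cases x y with ⟨h, _⟩ | ⟨h, _⟩ <;> rw [h] <;> assumption
  -- key identity : FFTT (R t) = c * t on D
  have key : ∀ t ∈ D, FFTT (R t) = c * t := by
    have hderiv : ∀ t ∈ D, HasDerivWithinAt (fun t => FFTT (R t) - c * t) 0 D t := by
      intro t ht
      obtain ⟨h0, h1⟩ := hrange t ht
      have ha : (0:ℝ) < 1 - R t ^ 2 := by nlinarith
      have hcomp : HasDerivWithinAt (fun t => FFTT (R t))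
          (ffTT (R t) * Real.sqrt (I₁ * (1 + R t ^ 2) ^ 3 / (1 - R t ^ 2))) D t :=
        (FFTT_deriv (R t)).comp_hasDerivWithinAt t (hR' t ht)
      have hval : ffTT (R t) * Real.sqrt (I₁ * (1 + R t ^ 2) ^ 3 / (1 - R t ^ 2)) = c := by
        unfold ffTT
        rw [← Real.sqrt_mul (by positivity)]
        rw [hc]
        congr 1
        field_simp
      rw [hval] at hcomp
      have h2 := hcomp.sub ((hasDerivWithinAt_id t D).const_mul c)
      simp only [mul_one, sub_self] at h2
      exact h2
    have h0D : (0:ℝ) ∈ D := by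
      rw [hD]; exact ⟨le_refl 0, by exact_mod_cast hT⟩
    intro t ht
    have h := hconv.norm_image_sub_le_of_norm_hasDerivWithin_le (C := 0) hderiv
      (fun x _ => by simp) h0D ht
    have hF0 : FFTT 0 = 0 := intervalIntegral.integral_same
    simp only [hR0, hF0, mul_zero, sub_zero, zero_mul, norm_le_zero_iff, sub_eq_zero] at h
    linarith [h]
  have h0D : (0:ℝ) ∈ D := by
    rw [hD]; exact ⟨le_refl 0, by exact_mod_cast hT⟩
  -- T is finite and bounded by T₀
  set T₀ : ℝ := FFTT 1 / c with hT₀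
  have hbound : ∀ t ∈ D, t ≤ T₀ := by
    intro t ht
    have h1 : FFTT (R t) ≤ FFTT 1 := FFTT_le _ (hrange t ht).2.le
    rw [key t ht] at h1
    rw [hT₀, le_div_iff₀ hsqrt]
    linarith [h1]
  have hT₀0 : 0 ≤ T₀ := hbound 0 h0D
  have hTle : T ≤ (T₀ : EReal) := by
    by_contra hcon
    push_neg at hcon
    obtain ⟨x, hx1, hx2⟩ := EReal.lt_iff_exists_real_btwn.1 hcon
    have hx1' : T₀ < x := by exact_mod_cast hx1
    have hxD : x ∈ D := by rw [hD]; exact ⟨le_trans hT₀0 hx1'.le, hx2⟩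
    exact absurd (hbound x hxD) (not_le.2 hx1')
  have hTne_top : T ≠ ⊤ := ne_top_of_le_ne_top (EReal.coe_ne_top T₀) hTle
  have hTne_bot : T ≠ ⊥ := by
    intro hbot; rw [hbot] at hT; exact absurd hT (by simp)
  set T' := T.toReal with hT'def
  have hTc : T = (T' : EReal) := (EReal.coe_toReal hTne_top hTne_bot).symm
  have hT'pos : 0 < T' := by
    rw [hTc] at hT; exact_mod_cast hT
  -- translate hlim to a real-valued limit
  have hlim' : Tendsto R (nhdsWithin T' (Iio T')) (nhds 1) := by
    have heq : comap (fun t : ℝ => (t : EReal)) (nhdsWithin T (Iio T))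
        = nhdsWithin T' (Iio T') := by
      rw [hTc, nhdsWithin, nhdsWithin, comap_inf, comap_principal]
      congr 1
      · rw [EReal.nhds_coe, comap_map EReal.coe_injective]
      · congr 1
        ext x
        simp [EReal.coe_lt_coe_iff]
    rwa [heq] at hlim
  -- pass to the limit along (Ioo 0 T')
  have hne : (nhdsWithin T' (Ioo 0 T')).NeBot := right_nhdsWithin_Ioo_neBot hT'pos
  have hle1 : nhdsWithin T' (Ioo 0 T') ≤ nhdsWithin T' (Iio T') :=
    nhdsWithin_mono _ Ioo_subset_Iio_self
  have hsub : Ioo 0 T' ⊆ D := by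
    rw [hD]; intro x hx
    refine ⟨hx.1.le, ?_⟩
    rw [hTc]; exact_mod_cast hx.2
  have ht1 : Tendsto (fun t => FFTT (R t)) (nhdsWithin T' (Ioo 0 T')) (nhds (FFTT 1)) :=
    ((FFTT_deriv 1).continuousAt.tendsto).comp (hlim'.mono_left hle1)
  have ht2 : Tendsto (fun t => c * t) (nhdsWithin T' (Ioo 0 T')) (nhds (c * T')) :=
    ((continuous_const.mul continuous_id).tendsto T').mono_left nhdsWithin_le_nhds
  have heq2 : (fun t => FFTT (R t)) =ᶠ[nhdsWithin T' (Ioo 0 T')] (fun t => c * t) :=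
    eventually_mem_nhdsWithin.mono (fun x hx => key x (hsub hx))
  have hfin : c * T' = FFTT 1 :=
    tendsto_nhds_unique ht2 (Filter.Tendsto.congr' heq2 ht1)
  -- conclude
  have hint : (∫ r in (0:ℝ)..1, Real.sqrt ((1 - r ^ 2) / (1 + r ^ 2) ^ 3)) = FFTT 1 := rfl
  have hpow : I₁ ^ (-(1:ℝ)/2) = c⁻¹ := by
    rw [hc, neg_div, Real.rpow_neg hI₁.le, Real.sqrt_eq_rpow]
  rw [hTc, hint, hpow]
  norm_cast
  field_simp
  linarith [hfin]
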